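/- For the billiard inside the ellipse E, a trajectory segment whose line does not intersect the open segment between the foci has an ellipse as caustic (tangency parameter μ ∈ (0, b)), while a segment whose line crosses the open segment between the foci has a hyperbola as caustic (μ ∈ (b, a)). -/

import Mathlib

/-- For a billiard chord of `E` on the line `ux + vy = 1`, whose caustic parameter is
`μ = (au² + bv² - 1)/(u² + v²)`: the caustic is a hyperbola (`μ ∈ (b, a)`) iff the line
meets the open focal segment `{(x,0) : |x| < √(a-b)}`, and the caustic is an ellipse
(`μ ∈ (0, b)`) iff the line misses the closed focal segment and meets the interior of
`E`. -/
theorem stmt16 (a b u v μ : ℝ) (hab : b < a) (hb : 0 < b)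
    (huv : u^2 + v^2 ≠ 0)
    (hμ : μ = (a*u^2 + b*v^2 - 1)/(u^2 + v^2)) :
    ((b < μ ∧ μ < a) ↔ ∃ x : ℝ, |x| < Real.sqrt (a - b) ∧ u*x + v*0 = 1) ∧
    ((0 < μ ∧ μ < b) ↔
      ((∀ x : ℝ, |x| ≤ Real.sqrt (a - b) → u*x + v*0 ≠ 1) ∧
        ∃ p : ℝ × ℝ, p.1^2/a + p.2^2/b < 1 ∧ u*p.1 + v*p.2 = 1)) := by
  have ha : 0 < a := hb.trans hab
  have hs : 0 < u^2 + v^2 := lt_of_le_of_ne (by positivity) (Ne.symm huv)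
  have hba : 0 < a - b := by linarith
  have h1 : b < μ ↔ 1 < (a - b) * u^2 := by
    rw [hμ, lt_div_iff₀ hs]; constructor <;> intro h <;> nlinarith
  have h2 : μ < a := by
    rw [hμ, div_lt_iff₀ hs]; nlinarith [sq_nonneg v]
  have h3 : 0 < μ ↔ 1 < a*u^2 + b*v^2 := by
    rw [hμ, lt_div_iff₀ hs]; constructor <;> intro h <;> nlinarith
  have h4 : μ < b ↔ (a - b) * u^2 < 1 := by
    rw [hμ, div_lt_iff₀ hs]; constructor <;> intro h <;> nlinarith
  constructor
  · constructor
    · rintro ⟨hbμ, -⟩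
      have hk := h1.mp hbμ
      have hu : u ≠ 0 := by rintro rfl; nlinarith
      have hu2 : 0 < u^2 := by positivity
      refine ⟨1/u, ?_, by field_simp; ring⟩
      have hlt : |1/u|^2 < a - b := by
        rw [sq_abs, div_pow, one_pow, div_lt_iff₀ hu2]; nlinarith
      calc |1/u| = Real.sqrt (|1/u|^2) := by rw [Real.sqrt_sq (abs_nonneg _)]
        _ < Real.sqrt (a-b) := Real.sqrt_lt_sqrt (by positivity) hlt
    · rintro ⟨x, hx, hline⟩
      have hline' : u * x = 1 := by linarith [hline]
      have hu : u ≠ 0 := by rintro rfl; simp at hline'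
      have hu2 : 0 < u^2 := by positivity
      have hx2 : x^2 < a - b := by
        have h := pow_lt_pow_left₀ hx (abs_nonneg x) (n := 2) two_ne_zero
        rwa [sq_abs, Real.sq_sqrt hba.le] at h
      have := mul_lt_mul_of_pos_left hx2 hu2
      exact ⟨h1.mpr (by nlinarith), h2⟩
  · constructor
    · rintro ⟨h0μ, hμb⟩
      have hk3 := h3.mp h0μ
      have hk4 := h4.mp hμb
      constructor
      · intro x hx hline
        have hline' : u * x = 1 := by linarith [hline]
        have hu : u ≠ 0 := by rintro rfl; simp at hline'
        have hu2 : 0 < u^2 := by positivity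
        have hx2 : x^2 ≤ a - b := by
          have h := pow_le_pow_left₀ (abs_nonneg x) hx 2
          rwa [sq_abs, Real.sq_sqrt hba.le] at h
        nlinarith [mul_le_mul_of_nonneg_left hx2 hu2.le]
      · set c := a*u^2 + b*v^2 with hc
        have hcpos : 0 < c := by nlinarith
        refine ⟨(a*u/c, b*v/c), ?_, ?_⟩
        · have : (a*u/c)^2/a + (b*v/c)^2/b = 1/c := by
            field_simp; ring
          rw [this]
          rw [div_lt_one hcpos]; linarith
        · field_simp; rw [hc]; ring
    · rintro ⟨hmiss, p, hint, hline⟩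
      have hk4 : (a - b) * u^2 < 1 := by
        by_cases hu : u = 0
        · subst hu; nlinarith
        · have hu2 : 0 < u^2 := by positivity
          have := hmiss (1/u)
          have hgt : Real.sqrt (a-b) < |1/u| := by
            by_contra hle
            push_neg at hle
            exact this hle (by field_simp; ring)
          have : a - b < (1/u)^2 := by
            have h := pow_lt_pow_left₀ hgt (Real.sqrt_nonneg _) (n := 2) two_ne_zero
            rwa [sq_abs, Real.sq_sqrt hba.le] at h
          rw [div_pow, one_pow, lt_div_iff₀ hu2] at this
          linarith
      have hk3 : 1 < a*u^2 + b*v^2 := by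
        have hq : b * p.1^2 + a * p.2^2 < a * b := by
          rw [div_add_div _ _ (ne_of_gt ha) (ne_of_gt hb), div_lt_one (by positivity)] at hint
          nlinarith
        have hcpos : 0 < a*u^2 + b*v^2 := by nlinarith
        have hh : (u*p.1 + v*p.2)^2 = 1 := by rw [hline]; norm_num
        nlinarith [sq_nonneg (a*u*p.2 - b*v*p.1), mul_pos ha hb, hq, hh,
          mul_lt_mul_of_pos_left hq hcpos]
      exact ⟨h3.mpr hk3, h4.mpr hk4⟩
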